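/- Let F ∈ D be entire, let x ∈ ℝ, k := ν(x,F), and δ > 0. If |a_n| e^{x λ_n} ≤ μ(x,F) · e^{−(δ/2)|n−k|} for every n ≠ k, then for every y ∈ ℝ: |F(x+iy) − a_k e^{(x+iy) λ_k}| ≤ ( 2 e^{−δ/2} / (1 − e^{−δ/2}) ) · μ(x,F). -/

import Mathlib

open Filter

/-- The value `F(x+iy) = ∑_{n=0}^∞ a_n e^{(x+iy)λ_n}` of the Dirichlet series. -/
noncomputable def Fval (a : ℕ → ℂ) (lam : ℕ → ℝ) (x y : ℝ) : ℂ :=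
  ∑' n : ℕ, a n * Complex.exp (((x : ℂ) + (y : ℂ) * Complex.I) * (lam n : ℂ))

lemma abs_cast_sub_eq_dist (n k : ℕ) : |(n : ℝ) - (k : ℝ)| = (Nat.dist n k : ℝ) := by
  rcases le_total n k with h | h
  · rw [Nat.dist_eq_sub_of_le h, abs_sub_comm,
      abs_of_nonneg (by exact sub_nonneg.mpr (by exact_mod_cast h)), Nat.cast_sub h]
  · rw [Nat.dist_eq_sub_of_le_right h,
      abs_of_nonneg (by exact sub_nonneg.mpr (by exact_mod_cast h)), Nat.cast_sub h]

/-- If `k = ν(x,F)` and `|a_n| e^{xλ_n} ≤ μ(x,F) e^{−(δ/2)|n−k|}` for all `n ≠ k`, then for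
every `y ∈ ℝ`: `|F(x+iy) − a_k e^{(x+iy)λ_k}| ≤ (2e^{−δ/2}/(1−e^{−δ/2})) μ(x,F)`. -/
theorem stmt_14 (a : ℕ → ℂ) (lam : ℕ → ℝ)
    (hdist : ∀ n m, n ≠ m → lam n ≠ lam m)
    (hlam0 : ∀ n, 0 ≤ lam n)
    (hlamsup : ∀ n, ∃ m, lam n < lam m)
    (hentire : ∀ x : ℝ, Summable fun n => ‖a n‖ * Real.exp (x * lam n))
    (x : ℝ) (δ : ℝ) (hδ : 0 < δ) (mux : ℝ) (k : ℕ)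
    (hmu : IsGreatest (Set.range fun n => ‖a n‖ * Real.exp (x * lam n)) mux)
    (hk1 : ‖a k‖ * Real.exp (x * lam k) = mux)
    (hk2 : ∀ n, ‖a n‖ * Real.exp (x * lam n) = mux → n ≤ k)
    (hbound : ∀ n, n ≠ k →
      ‖a n‖ * Real.exp (x * lam n) ≤
        mux * Real.exp (-(δ / 2) * |(n : ℝ) - (k : ℝ)|)) :
    ∀ y : ℝ,
      ‖Fval a lam x y -
          a k * Complex.exp (((x : ℂ) + (y : ℂ) * Complex.I) * (lam k : ℂ))‖ ≤
        2 * Real.exp (-δ / 2) / (1 - Real.exp (-δ / 2)) * mux := by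
  intro y
  set r : ℝ := Real.exp (-(δ / 2)) with hrdef
  have hr0 : 0 < r := Real.exp_pos _
  have hr1 : r < 1 := Real.exp_lt_one_iff.mpr (by linarith)
  have hmux0 : 0 ≤ mux := hk1 ▸ by positivity
  set f : ℕ → ℂ := fun n => a n * Complex.exp (((x : ℂ) + (y : ℂ) * Complex.I) * (lam n : ℂ))
    with hfdef
  have hnorm : ∀ n, ‖f n‖ = ‖a n‖ * Real.exp (x * lam n) := by
    intro n
    have : (((x : ℂ) + (y : ℂ) * Complex.I) * (lam n : ℂ)).re = x * lam n := by
      simp [Complex.add_re, Complex.mul_re]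
    simp [hfdef, Complex.norm_exp, this]
  have hsum : Summable f := by
    rw [← summable_norm_iff]
    simpa only [hnorm] using hentire x
  have hsplit : Fval a lam x y = f k + ∑' n, if n = k then 0 else f n :=
    Summable.tsum_eq_add_tsum_ite hsum k
  have hkey : Fval a lam x y - f k = ∑' n, if n = k then 0 else f n := by
    rw [hsplit]; ring
  -- the dominating real series
  set h : ℕ → ℝ := fun n => if n = k then 0 else mux * r ^ Nat.dist n k with hhdef
  have hh0 : ∀ n, 0 ≤ h n := by
    intro n; by_cases hn : n = k <;> simp [hhdef, hn] <;> positivity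
  have hhsum : Summable h := by
    rw [← (summable_nat_add_iff (k + 1))]
    have : (fun n => h (n + (k + 1))) = fun n => mux * r ^ (n + 1) := by
      funext n
      have h1 : n + (k + 1) ≠ k := by omega
      have h2 : Nat.dist (n + (k + 1)) k = n + 1 := by
        rw [Nat.dist_eq_sub_of_le_right (by omega)]; omega
      simp [hhdef, h1, h2]
    rw [this]
    exact ((summable_geometric_of_lt_one hr0.le hr1).mul_left mux).comp_injective
      (add_left_injective 1)
  have hle : ∀ n, ‖(if n = k then 0 else f n : ℂ)‖ ≤ h n := by
    intro n
    by_cases hn : n = k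
    · simp [hn, hhdef]
    · simp only [hhdef, if_neg hn]
      rw [hnorm]
      calc ‖a n‖ * Real.exp (x * lam n)
          ≤ mux * Real.exp (-(δ / 2) * |(n : ℝ) - (k : ℝ)|) := hbound n hn
        _ = mux * r ^ Nat.dist n k := by
            rw [abs_cast_sub_eq_dist, mul_comm (-(δ / 2)), Real.exp_nat_mul]
  have hsum' : Summable fun n => (if n = k then 0 else f n : ℂ) := by
    rw [← summable_norm_iff]
    exact Summable.of_nonneg_of_le (fun n => norm_nonneg _) hle hhsum
  -- tail geometric sum
  have htail : ∑' n : ℕ, mux * r ^ (n + 1) = mux * r / (1 - r) := by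
    have : ∑' n : ℕ, mux * r ^ (n + 1) = (mux * r) * ∑' n : ℕ, r ^ n := by
      rw [← tsum_mul_left]; congr 1; funext n; ring
    rw [this, tsum_geometric_of_lt_one hr0.le hr1]
    field_simp
  have hhead : ∑ i ∈ Finset.range (k + 1), h i ≤ mux * r / (1 - r) := by
    have h1 : ∑ i ∈ Finset.range (k + 1), h i = ∑ i ∈ Finset.range k, h i := by
      rw [Finset.sum_range_succ]; simp [hhdef]
    have h2 : ∑ i ∈ Finset.range k, h i = ∑ j ∈ Finset.range k, mux * r ^ (j + 1) := by
      rw [← Finset.sum_range_reflect (fun j => mux * r ^ (j + 1)) k]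
      apply Finset.sum_congr rfl
      intro i hi
      have hik : i < k := Finset.mem_range.mp hi
      have hne : i ≠ k := by omega
      have hd : Nat.dist i k = k - 1 - i + 1 := by
        rw [Nat.dist_eq_sub_of_le hik.le]; omega
      simp [hhdef, hne, hd]
    rw [h1, h2, ← htail]
    exact Summable.sum_le_tsum _ (fun i _ => by positivity)
      (((summable_geometric_of_lt_one hr0.le hr1).mul_left mux).comp_injective
        (add_left_injective 1))
  have htsum : ∑' n, h n ≤ 2 * mux * r / (1 - r) := by
    rw [← Summable.sum_add_tsum_nat_add' ((summable_nat_add_iff (k + 1)).mpr hhsum)]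
    have : ∑' n, h (n + (k + 1)) = mux * r / (1 - r) := by
      have heq : (fun n => h (n + (k + 1))) = fun n => mux * r ^ (n + 1) := by
        funext n
        have h1 : n + (k + 1) ≠ k := by omega
        have h2 : Nat.dist (n + (k + 1)) k = n + 1 := by
          rw [Nat.dist_eq_sub_of_le_right (by omega)]; omega
        simp [hhdef, h1, h2]
      rw [heq, htail]
    rw [this]
    have h2 : 2 * mux * r / (1 - r) = mux * r / (1 - r) + mux * r / (1 - r) := by ring
    rw [h2]
    linarith [hhead]
  calc ‖Fval a lam x y - f k‖
      = ‖∑' n, if n = k then 0 else f n‖ := by rw [hkey]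
    _ ≤ ∑' n, ‖(if n = k then 0 else f n : ℂ)‖ := norm_tsum_le_tsum_norm (by
        rw [summable_norm_iff]; exact hsum')
    _ ≤ ∑' n, h n := Summable.tsum_le_tsum hle (by rw [← summable_norm_iff] at hsum'; exact hsum') hhsum
    _ ≤ 2 * mux * r / (1 - r) := htsum
    _ = 2 * Real.exp (-δ / 2) / (1 - Real.exp (-δ / 2)) * mux := by
        rw [hrdef, neg_div]; ring
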